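/- Let A be an abelian k-category (k a field) which is artinian, has enough projectives, and satisfies End(L) = k for every simple object L. Let π : P ↠ A be an epimorphism, L a simple object, E = Ext¹(A, L) (assumed finite-dimensional), and let 0 → E* ⊗ L → M → A → 0 be the extension classified by id_E ∈ E* ⊗ E ≅ Ext¹(A, E* ⊗ L). Then any morphism π̃ : P → M lifting π (i.e. with c ∘ π̃ = π where c : M → A) is an epimorphism. -/

import Mathlib

/-!
STATEMENT 5: Let `A` be an artinian `k`-linear abelian category (`k` a field)
with enough projectives and `End(L) = k` for every simple object `L`.  Let
`π : P ↠ A` be an epimorphism, `L` a simple object, `E = Ext¹(A, L)` (finite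
dimensional), and let `0 → E* ⊗ L → M → A → 0` be the extension classified by
`id_E ∈ E* ⊗ E ≅ Ext¹(A, E* ⊗ L)`.  Then any morphism `π̃ : P → M` lifting `π`
(i.e. `c ∘ π̃ = π` where `c : M → A`) is an epimorphism.

Encoding of "the extension classified by `id_E`": the kernel `K` of the
extension is a finite direct sum `L^{⊕ r}` of copies of `L`, and the map
`Hom(K, L) → Ext¹(A, L)`, `φ ↦ φ_* (class of the extension)`, is bijective.
(For `End(L) = k` and `E` finite dimensional this is precisely equivalent to
`K ≅ E* ⊗ L` with extension class `id_E`.)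
-/

open CategoryTheory CategoryTheory.Limits CategoryTheory.Abelian

universe w v u

attribute [local instance] CategoryTheory.Abelian.hasFiniteBiproducts

/-- Auxiliary: a nonzero quotient of a finite direct sum of copies of a simple
object `L` admits a nonzero morphism to `L`. -/
lemma aux_exists_hom_to_simple {C : Type u} [Category.{v} C] [Abelian C]
    (L : C) (hL : Simple L) :
    ∀ (r : ℕ) (Q : C) (p : (⨁ fun _ : Fin r => L) ⟶ Q), Epi p → ¬ IsZero Q →
      ∃ φ : Q ⟶ L, φ ≠ 0 := by
  haveI := hL
  intro r
  induction r with
  | zero =>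
    intro Q p hp hQ
    exfalso
    apply hQ
    have hp0 : p = 0 := by
      apply biproduct.hom_ext'
      intro j
      exact j.elim0
    haveI : Epi (0 : (⨁ fun _ : Fin 0 => L) ⟶ Q) := hp0 ▸ hp
    exact IsZero.of_epi_zero (⨁ fun _ : Fin 0 => L) Q
  | succ n ih =>
    intro Q p hp hQ
    haveI := hp
    set j : L ⟶ Q := biproduct.ι (fun _ : Fin (n + 1) => L) (Fin.last n) ≫ p with hj
    by_cases hQ' : IsZero (cokernel j)
    · -- `j` is epi, hence an isomorphism, hence `Q ≅ L`.
      have hπ0 : cokernel.π j = 0 := hQ'.eq_zero_of_tgt _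
      haveI hjepi : Epi j := Preadditive.epi_of_cokernel_zero hπ0
      have hjne : j ≠ 0 := by
        intro h
        apply hQ
        haveI : Epi (0 : L ⟶ Q) := h ▸ hjepi
        exact IsZero.of_epi_zero L Q
      haveI : IsIso j := isIso_of_epi_of_nonzero hjne
      refine ⟨inv j, ?_⟩
      intro h
      apply hQ
      rw [IsZero.iff_id_eq_zero]
      calc 𝟙 Q = inv j ≫ j := (IsIso.inv_hom_id j).symm
        _ = 0 := by rw [h, zero_comp]
    · -- factor `p ≫ cokernel.π j` through the smaller biproduct.
      set t : Q ⟶ cokernel j := cokernel.π j with ht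
      have hlast : biproduct.ι (fun _ : Fin (n + 1) => L) (Fin.last n) ≫ (p ≫ t) = 0 := by
        rw [← Category.assoc, ← hj, ht, cokernel.condition]
      set g : (⨁ fun _ : Fin n => L) ⟶ cokernel j :=
        biproduct.desc (fun i => biproduct.ι (fun _ : Fin (n + 1) => L) i.castSucc ≫ (p ≫ t))
        with hg
      set h : (⨁ fun _ : Fin (n + 1) => L) ⟶ (⨁ fun _ : Fin n => L) :=
        biproduct.desc (fun i =>
          Fin.lastCases 0 (fun i' => biproduct.ι (fun _ : Fin n => L) i') i) with hh
      have hfact : h ≫ g = p ≫ t := by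
        apply biproduct.hom_ext'
        intro b
        induction b using Fin.lastCases with
        | last => simp [hh, hlast]
        | cast i' => simp [hh, hg]
      have hgepi : Epi g := by
        haveI : Epi (h ≫ g) := by
          rw [hfact]
          infer_instance
        exact epi_of_epi h g
      obtain ⟨φ, hφ⟩ := ih (cokernel j) g hgepi hQ'
      refine ⟨t ≫ φ, ?_⟩
      intro hzero
      exact hφ (zero_of_epi_comp t hzero)

theorem statement5 {C : Type u} [Category.{v} C] [Abelian C] [HasExt.{w} C]
    (k : Type*) [Field k] [Linear k C]
    -- `C` is artinian (every object has finite length):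
    (hart : ∀ X : C, IsArtinianObject X ∧ IsNoetherianObject X)
    -- enough projectives:
    [EnoughProjectives C]
    -- `End(L') = k` for every simple object `L'`:
    (hEnd : ∀ L' : C, Simple L' → ∀ f : L' ⟶ L', ∃ c : k, f = c • 𝟙 L')
    -- the data: an epimorphism `π : P ⟶ A`
    {P A : C} (π : P ⟶ A) (hπ : Epi π)
    -- a simple object `L`
    (L : C) (hL : Simple L)
    -- the extension `0 → K → M → A → 0` with `K ≅ L^{⊕ r} (≅ E* ⊗ L)` ...
    {K M : C} (i : K ⟶ M) (c : M ⟶ A) (w : i ≫ c = 0)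
    (hSE : (ShortComplex.mk i c w).ShortExact)
    (r : ℕ) (eK : K ≅ ⨁ (fun _ : Fin r => L))
    -- ... classified by `id_E ∈ E* ⊗ E ≅ Ext¹(A, E* ⊗ L)`, i.e. pushing the
    -- extension class forward along morphisms `K → L` gives a bijection
    -- `Hom(K, L) ≅ Ext¹(A, L) = E`:
    (hclass : Function.Bijective
      (fun φ : K ⟶ L => hSE.extClass.comp (Ext.mk₀ φ) (add_zero 1)))
    -- a lift `π̃` of `π`:
    (πt : P ⟶ M) (hlift : πt ≫ c = π) :
    Epi πt := by
  haveI := hL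
  haveI := hπ
  haveI := hSE.epi_g
  by_contra hne
  set q : M ⟶ cokernel πt := cokernel.π πt with hq
  have hQ : ¬ IsZero (cokernel πt) := by
    intro h
    exact hne (Preadditive.epi_of_cokernel_zero (h.eq_zero_of_tgt _))
  -- `i ≫ q` is an epimorphism
  have hiq : Epi (i ≫ q) := by
    apply Preadditive.epi_of_cancel_zero
    intro R g hg
    have hg' : i ≫ (q ≫ g) = 0 := by rw [← Category.assoc]; exact hg
    set d : A ⟶ R := hSE.exact.desc (q ≫ g) hg' with hd
    have hcd : c ≫ d = q ≫ g := hSE.exact.g_desc _ _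
    have hπd : π ≫ d = 0 := by
      rw [← hlift, Category.assoc, hcd, ← Category.assoc, hq, cokernel.condition, zero_comp]
    have hd0 : d = 0 := by
      have : π ≫ d = π ≫ 0 := by rw [hπd, comp_zero]
      exact (cancel_epi π).1 this
    have hqg : q ≫ g = 0 := by rw [← hcd, hd0, comp_zero]
    exact zero_of_epi_comp q hqg
  haveI := hiq
  -- produce a nonzero morphism from the cokernel to `L`
  have hpepi : Epi (eK.inv ≫ (i ≫ q)) := epi_comp _ _
  obtain ⟨φ', hφ'⟩ := aux_exists_hom_to_simple L hL r (cokernel πt) (eK.inv ≫ (i ≫ q)) hpepi hQ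
  set φ : K ⟶ L := i ≫ (q ≫ φ') with hφdef
  have hφ : φ ≠ 0 := by
    intro h0
    apply hφ'
    have : (i ≫ q) ≫ φ' = 0 := by rw [Category.assoc]; exact h0
    exact zero_of_epi_comp (i ≫ q) this
  apply hφ
  apply hclass.injective
  show hSE.extClass.comp (Ext.mk₀ φ) (add_zero 1)
      = hSE.extClass.comp (Ext.mk₀ (0 : K ⟶ L)) (add_zero 1)
  rw [Ext.mk₀_zero, Ext.comp_zero]
  have hmk : Ext.mk₀ φ = (Ext.mk₀ i).comp (Ext.mk₀ (q ≫ φ')) (zero_add 0) :=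
    (Ext.mk₀_comp_mk₀ i (q ≫ φ')).symm
  rw [hmk]
  exact hSE.extClass_comp_assoc (Ext.mk₀ (q ≫ φ'))
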